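/- Let α > 0 be a real number that is not an integer, and let s be a positive integer. Define u : (0,∞) → ℝ by u(x) = exp(−x^α). Then all derivatives u, u′, …, u^(s) are square-integrable on (0,∞) (i.e. u belongs to the Sobolev space H^s(0,∞)) if and only if α > s − 1/2. -/

import Mathlib

open MeasureTheory

open Real Set Finset in
private lemma sob_integrableOn {q b p : ℝ} (hq : -1 < q) (hb : 0 < b) (hp : 0 < p) :
    IntegrableOn (fun x : ℝ => x ^ q * Real.exp (-b * x ^ p)) (Ioi 0) := by
  have h1 : -1 < (q + 1) / p - 1 := by
    have : 0 < (q + 1) / p := div_pos (by linarith) hp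
    linarith
  have h0 : IntegrableOn (fun y : ℝ => y ^ ((q + 1) / p - 1) * Real.exp (-b * y ^ (1 : ℝ)))
      (Ioi 0) := integrableOn_rpow_mul_exp_neg_mul_rpow h1 one_pos hb
  have h2 := (integrableOn_Ioi_comp_rpow_iff'
      (fun y : ℝ => y ^ ((q + 1) / p - 1) * Real.exp (-b * y ^ (1 : ℝ))) hp.ne').mpr h0
  refine h2.congr_fun (fun x hx => ?_) measurableSet_Ioi
  have hx0 : (0:ℝ) < x := hx
  have e1 : (x ^ p) ^ ((q + 1) / p - 1) = x ^ (q + 1 - p) := by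
    rw [← Real.rpow_mul hx0.le]
    congr 1
    field_simp
  dsimp only
  rw [smul_eq_mul, e1, Real.rpow_one, ← mul_assoc, ← Real.rpow_add hx0]
  ring_nf

open Real Set Finset in
private lemma sob_memLp_term {α : ℝ} (hα : 0 < α) {q : ℝ} (hq : -(1/2) < q) :
    MemLp (fun x : ℝ => x ^ q * Real.exp (-(x ^ α))) 2 (volume.restrict (Ioi 0)) := by
  have hcont : ContinuousOn (fun x : ℝ => x ^ q * Real.exp (-(x ^ α))) (Ioi 0) := by
    apply ContinuousOn.mul
    · exact fun x hx => (continuousWithinAt_id.rpow_const (Or.inl (ne_of_gt hx)))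
    · have h1 : ContinuousOn (fun x : ℝ => x ^ α) (Ioi 0) :=
        fun x _ => continuousWithinAt_id.rpow_const (Or.inr hα.le)
      exact Real.continuous_exp.comp_continuousOn h1.neg
  rw [memLp_two_iff_integrable_sq (hcont.aestronglyMeasurable measurableSet_Ioi)]
  refine (sob_integrableOn (q := 2 * q) (by linarith) two_pos hα).congr_fun
    (fun x hx => ?_) measurableSet_Ioi
  have hx0 : (0:ℝ) < x := hx
  have e1 : x ^ (2 * q) = x ^ q * x ^ q := by rw [two_mul, Real.rpow_add hx0]
  have e2 : Real.exp (-2 * x ^ α) = Real.exp (-(x ^ α)) * Real.exp (-(x ^ α)) := by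
    rw [← Real.exp_add]; ring_nf
  dsimp only
  rw [e1, e2]; ring

private noncomputable def sobCoef (α : ℝ) : ℕ → ℕ → ℝ
  | 0, _ => 0
  | 1, k => if k = 1 then -α else 0
  | (n + 2), k => ((k : ℝ) * α - (n + 1)) * sobCoef α (n + 1) k
      - α * sobCoef α (n + 1) (k - 1)

private lemma sobCoef_succ (α : ℝ) (n : ℕ) (hn : 1 ≤ n) (k : ℕ) :
    sobCoef α (n + 1) k = ((k : ℝ) * α - n) * sobCoef α n k - α * sobCoef α n (k - 1) := by
  obtain ⟨m, rfl⟩ := Nat.exists_eq_add_of_le' hn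
  show sobCoef α (m + 2) k = _
  rw [sobCoef]
  push_cast
  ring_nf

private lemma sobCoef_zero (α : ℝ) (n : ℕ) : sobCoef α n 0 = 0 := by
  induction n with
  | zero => rfl
  | succ n ih =>
    match n, ih with
    | 0, _ => simp [sobCoef]
    | (m + 1), ih =>
      rw [sobCoef_succ α (m + 1) (by omega)]
      simp [ih]

private lemma sobCoef_of_gt (α : ℝ) : ∀ n k : ℕ, n < k → sobCoef α n k = 0 := by
  intro n
  induction n with
  | zero => intro k _; rfl
  | succ n ih =>
    intro k hk
    match n with
    | 0 =>
      have : k ≠ 1 := by omega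
      simp [sobCoef, this]
    | (m + 1) =>
      rw [sobCoef_succ α (m + 1) (by omega)]
      rw [ih k (by omega), ih (k - 1) (by omega)]
      ring

private lemma sobCoef_one_ne (α : ℝ) (hα : α ≠ 0) (hnotint : ∀ n : ℤ, α ≠ n) :
    ∀ n : ℕ, 1 ≤ n → sobCoef α n 1 ≠ 0 := by
  intro n hn
  induction n with
  | zero => omega
  | succ n ih =>
    match n, ih with
    | 0, _ => simp [sobCoef, hα]
    | (m + 1), ih =>
      rw [sobCoef_succ α (m + 1) (by omega)]
      rw [sobCoef_zero]
      have h1 : sobCoef α (m + 1) 1 ≠ 0 := ih (by omega)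
      have h2 : α - ((m : ℝ) + 1) ≠ 0 := by
        have := hnotint ((m : ℤ) + 1)
        push_cast at this ⊢
        intro h; apply this; linarith
      simp only [Nat.cast_one, one_mul, mul_zero, sub_zero]
      exact mul_ne_zero (by push_cast; exact h2) h1

private noncomputable def sobG (α : ℝ) (n : ℕ) (x : ℝ) : ℝ :=
  (∑ k ∈ Finset.range n, sobCoef α n (k + 1) * x ^ ((k + 1 : ℝ) * α - n)) * Real.exp (-(x ^ α))

open Real Set Finset in
private lemma sob_expansion (α : ℝ) :
    ∀ n : ℕ, 1 ≤ n → ∀ x ∈ Set.Ioi (0 : ℝ),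
      iteratedDerivWithin n (fun x : ℝ => Real.exp (-(x ^ α))) (Set.Ioi 0) x = sobG α n x := by
  intro n hn
  induction n, hn using Nat.le_induction with
  | base =>
    intro x hx
    have hx0 : (0 : ℝ) < x := hx
    rw [iteratedDerivWithin_one,
      derivWithin_of_isOpen isOpen_Ioi hx]
    have h1 : HasDerivAt (fun y : ℝ => y ^ α) (α * x ^ (α - 1)) x :=
      Real.hasDerivAt_rpow_const (Or.inl hx0.ne')
    have h2 : HasDerivAt (fun y : ℝ => Real.exp (-(y ^ α)))
        (Real.exp (-(x ^ α)) * -(α * x ^ (α - 1))) x := h1.neg.exp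
    rw [h2.deriv]
    simp only [sobG, sobCoef, Finset.sum_range_one, if_pos rfl]
    norm_num
    ring
  | succ n hn ih =>
    intro x hx
    have hx0 : (0 : ℝ) < x := hx
    rw [iteratedDerivWithin_succ,
      derivWithin_congr (fun y hy => ih y hy) (ih x hx),
      derivWithin_of_isOpen isOpen_Ioi hx]
    have hsum : HasDerivAt
        (fun y : ℝ => ∑ k ∈ Finset.range n, sobCoef α n (k + 1) * y ^ ((k + 1 : ℝ) * α - n))
        (∑ k ∈ Finset.range n, sobCoef α n (k + 1) *
          (((k + 1 : ℝ) * α - n) * x ^ ((k + 1 : ℝ) * α - n - 1))) x := by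
      refine HasDerivAt.fun_sum fun k _ => ?_
      exact (Real.hasDerivAt_rpow_const (Or.inl hx0.ne')).const_mul _
    have hexp : HasDerivAt (fun y : ℝ => Real.exp (-(y ^ α)))
        (Real.exp (-(x ^ α)) * -(α * x ^ (α - 1))) x :=
      (Real.hasDerivAt_rpow_const (Or.inl hx0.ne')).neg.exp
    have hprod := hsum.fun_mul hexp
    rw [show (sobG α n) = (fun y : ℝ => (∑ k ∈ Finset.range n,
      sobCoef α n (k + 1) * y ^ ((k + 1 : ℝ) * α - n)) * Real.exp (-(y ^ α))) from rfl]
    rw [hprod.deriv, sobG]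
    set E := Real.exp (-(x ^ α)) with hE
    have key : ∀ a b : ℝ, x ^ a * x ^ b = x ^ (a + b) := fun a b => (Real.rpow_add hx0 a b).symm
    have expo1 : ∀ k : ℕ, ((k + 1 : ℝ) * α - n - 1) = ((k + 1 : ℝ) * α - (n + 1)) := by
      intro k; push_cast; ring
    have S1 : (∑ k ∈ Finset.range n, sobCoef α n (k + 1) *
          (((k + 1 : ℝ) * α - n) * x ^ ((k + 1 : ℝ) * α - n - 1)))
        = ∑ k ∈ Finset.range (n + 1), (((k + 1 : ℝ) * α - n) * sobCoef α n (k + 1)) *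
            x ^ ((k + 1 : ℝ) * α - (n + 1)) := by
      rw [Finset.sum_range_succ, sobCoef_of_gt α n (n + 1) (by omega)]
      rw [mul_zero, zero_mul, add_zero]
      refine Finset.sum_congr rfl fun k _ => ?_
      rw [expo1]; ring
    have S2 : (∑ k ∈ Finset.range n, sobCoef α n (k + 1) * x ^ ((k + 1 : ℝ) * α - n))
          * (-(α * x ^ (α - 1)))
        = ∑ k ∈ Finset.range (n + 1), (-(α * sobCoef α n k)) *
            x ^ ((k + 1 : ℝ) * α - (n + 1)) := by
      rw [Finset.sum_range_succ', sobCoef_zero]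
      simp only [mul_zero, zero_mul, neg_zero, add_zero, Finset.sum_mul]
      refine Finset.sum_congr rfl fun k _ => ?_
      rw [mul_comm (α) (x ^ (α - 1))]
      rw [show sobCoef α n (k + 1) * x ^ ((k + 1 : ℝ) * α - n) * -(x ^ (α - 1) * α)
        = (-(α * sobCoef α n (k + 1))) * (x ^ ((k + 1 : ℝ) * α - n) * x ^ (α - 1)) by ring]
      rw [key]
      congr 2
      push_cast; ring
    rw [S1, mul_comm E (-(α * x ^ (α - 1))), ← mul_assoc, S2, ← add_mul,
      ← Finset.sum_add_distrib]
    congr 1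
    refine Finset.sum_congr rfl fun k _ => ?_
    rw [sobCoef_succ α n hn (k + 1)]
    simp only [Nat.add_sub_cancel]
    push_cast
    ring

open Real Set Finset in
private lemma sob_memLp_G {α : ℝ} (hα : 0 < α) (n : ℕ) (hgt : (n : ℝ) - 1 / 2 < α) :
    MemLp (sobG α n) 2 (volume.restrict (Ioi 0)) := by
  have : sobG α n = fun x => ∑ k ∈ Finset.range n,
      sobCoef α n (k + 1) * (x ^ ((k + 1 : ℝ) * α - n) * Real.exp (-(x ^ α))) := by
    funext x
    rw [sobG, Finset.sum_mul]
    exact Finset.sum_congr rfl fun k _ => by ring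
  rw [this]
  refine memLp_finsetSum (f := fun (k : ℕ) (x : ℝ) =>
    sobCoef α n (k + 1) * (x ^ ((k + 1 : ℝ) * α - n) * Real.exp (-(x ^ α))))
    (Finset.range n) fun k _ => ?_
  refine MemLp.const_mul ?_ _
  refine sob_memLp_term hα ?_
  have hk : (0:ℝ) ≤ (k : ℝ) * α := mul_nonneg (Nat.cast_nonneg k) hα.le
  nlinarith

/-- For real non-integer `α > 0` and a positive integer `s`, the function
`u(x) = exp(−x^α)` on `(0,∞)` belongs to `H^s(0,∞)` — i.e. `u` and its derivatives within
`(0,∞)` up to order `s` are all in `L²((0,∞))` — if and only if `α > s − 1/2`. -/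
theorem sobolev_membership_exp_neg_rpow (α : ℝ) (hα : 0 < α) (hnotint : ∀ n : ℤ, α ≠ n)
    (s : ℕ) (hs : 0 < s) :
    (∀ n : ℕ, n ≤ s →
        MemLp (iteratedDerivWithin n (fun x : ℝ => Real.exp (-(x ^ α))) (Set.Ioi (0 : ℝ))) 2
          (volume.restrict (Set.Ioi (0 : ℝ))))
      ↔ α > (s : ℝ) - 1 / 2 := by
  have hs1 : 1 ≤ s := hs
  constructor
  · intro H
    -- transfer to the explicit form
    have hae : iteratedDerivWithin s (fun x : ℝ => Real.exp (-(x ^ α))) (Set.Ioi 0)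
        =ᵐ[volume.restrict (Set.Ioi (0:ℝ))] sobG α s := by
      filter_upwards [ae_restrict_mem measurableSet_Ioi] with x hx
      exact sob_expansion α s hs1 x hx
    have hf : MemLp (sobG α s) 2 (volume.restrict (Set.Ioi (0:ℝ))) := (H s le_rfl).ae_eq hae
    have hsq : Integrable (fun x => sobG α s x ^ 2) (volume.restrict (Set.Ioi (0:ℝ))) :=
      (memLp_two_iff_integrable_sq hf.1).mp hf
    set c := sobCoef α s 1 with hcdef
    have hc : c ≠ 0 := sobCoef_one_ne α hα.ne' hnotint s hs1
    set h : ℝ → ℝ := fun x => (∑ k ∈ Finset.range s,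
      sobCoef α s (k + 1) * x ^ ((k : ℝ) * α)) * Real.exp (-(x ^ α)) with hhdef
    have hfac : ∀ x ∈ Set.Ioi (0:ℝ), sobG α s x = x ^ (α - s) * h x := by
      intro x hx
      have hx0 : (0:ℝ) < x := hx
      rw [sobG, hhdef, ← mul_assoc]
      congr 1
      rw [Finset.mul_sum]
      refine Finset.sum_congr rfl fun k _ => ?_
      rw [show x ^ (α - (s:ℝ)) * (sobCoef α s (k + 1) * x ^ ((k : ℝ) * α))
        = sobCoef α s (k + 1) * (x ^ (α - (s:ℝ)) * x ^ ((k : ℝ) * α)) by ring,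
        ← Real.rpow_add hx0]
      congr 2
      push_cast; ring
    have h0 : h 0 = c := by
      rw [hhdef]
      simp only [Real.zero_rpow hα.ne', neg_zero, Real.exp_zero, mul_one]
      rw [Finset.sum_eq_single 0]
      · simp [hcdef]
      · intro k _ hk
        rw [Real.zero_rpow (by
          have : (0:ℝ) < (k:ℝ) * α := mul_pos (by exact_mod_cast Nat.pos_of_ne_zero hk) hα
          exact this.ne')]
        ring
      · intro habs
        exact absurd (Finset.mem_range.mpr hs1) habs
    have hlim : Filter.Tendsto h (nhdsWithin 0 (Set.Ioi (0:ℝ))) (nhds c) := by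
      have hcw : ContinuousWithinAt h (Set.Ioi (0:ℝ)) 0 := by
        apply ContinuousWithinAt.mul
        · exact tendsto_finset_sum _ fun k _ => ((continuousWithinAt_id.rpow_const
            (Or.inr (mul_nonneg (Nat.cast_nonneg k) hα.le))).const_mul _)
        · exact (Real.continuous_exp.continuousAt.comp_continuousWithinAt
            ((continuousWithinAt_id.rpow_const (Or.inr hα.le)).neg))
      rw [← h0]
      exact hcw
    have habs : ∀ᶠ x in nhdsWithin 0 (Set.Ioi (0:ℝ)), |c| / 2 < |h x| := by
      have := (continuous_abs.continuousAt.tendsto.comp hlim)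
      exact this.eventually (eventually_gt_nhds (half_lt_self (abs_pos.mpr hc)))
    obtain ⟨δ, hδ0, hsub⟩ := mem_nhdsGT_iff_exists_Ioo_subset.mp habs
    have hδ0' : (0:ℝ) < δ := hδ0
    have hint : IntegrableOn (fun x : ℝ => x ^ (2 * (α - s))) (Set.Ioo 0 δ) := by
      have h2 : IntegrableOn (fun x => sobG α s x ^ 2) (Set.Ioo 0 δ) :=
        (show IntegrableOn (fun x => sobG α s x ^ 2) (Set.Ioi 0) volume from hsq).mono_set Set.Ioo_subset_Ioi_self
      refine Integrable.mono' (h2.const_mul ((2 / |c|) ^ 2)) ?_ ?_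
      · exact (ContinuousOn.aestronglyMeasurable
          (fun x hx => continuousWithinAt_id.rpow_const (Or.inl (ne_of_gt hx.1)))
          measurableSet_Ioo)
      · rw [MeasureTheory.ae_restrict_iff' measurableSet_Ioo]
        refine Filter.Eventually.of_forall fun x hx => ?_
        have hx0 : (0:ℝ) < x := hx.1
        have hA : (0:ℝ) ≤ x ^ (α - (s:ℝ)) := Real.rpow_nonneg hx0.le _
        have eA : x ^ (2 * (α - (s:ℝ))) = (x ^ (α - (s:ℝ))) ^ 2 := by
          rw [two_mul, Real.rpow_add hx0, sq]
        have hH : |c| / 2 ≤ |h x| := (hsub hx).le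
        have hH2 : (|c| / 2) ^ 2 ≤ h x ^ 2 := by
          rw [← sq_abs (h x)]
          exact pow_le_pow_left₀ (by positivity) hH 2
        rw [Real.norm_eq_abs, eA, abs_of_nonneg (sq_nonneg _),
          hfac x (Set.mem_Ioo.mp hx).1, mul_pow]
        calc (x ^ (α - (s:ℝ))) ^ 2
            = (2 / |c|) ^ 2 * ((x ^ (α - (s:ℝ))) ^ 2 * (|c| / 2) ^ 2) := by
              have : (2 / |c|) ^ 2 * (|c| / 2) ^ 2 = 1 := by
                field_simp
              rw [show (2 / |c|) ^ 2 * ((x ^ (α - (s:ℝ))) ^ 2 * (|c| / 2) ^ 2)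
                = ((2 / |c|) ^ 2 * (|c| / 2) ^ 2) * (x ^ (α - (s:ℝ))) ^ 2 by ring, this,
                one_mul]
          _ ≤ (2 / |c|) ^ 2 * ((x ^ (α - (s:ℝ))) ^ 2 * h x ^ 2) := by
              refine mul_le_mul_of_nonneg_left ?_ (by positivity)
              exact mul_le_mul_of_nonneg_left hH2 (sq_nonneg _)
    rw [intervalIntegral.integrableOn_Ioo_rpow_iff hδ0'] at hint
    linarith
  · intro hgt n hn
    rcases Nat.eq_zero_or_pos n with rfl | hn1
    · rw [iteratedDerivWithin_zero]
      have := sob_memLp_term hα (q := 0) (by norm_num)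
      simpa [Real.rpow_zero] using this
    · have hG : MemLp (sobG α n) 2 (volume.restrict (Set.Ioi (0:ℝ))) := by
        refine sob_memLp_G hα n ?_
        have : (n : ℝ) ≤ (s : ℝ) := Nat.cast_le.mpr hn
        linarith
      refine hG.ae_eq ?_
      filter_upwards [ae_restrict_mem measurableSet_Ioi] with x hx
      exact (sob_expansion α n hn1 x hx).symm
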